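/- If S is a set of positive integers containing 1, then the set of exponentially S-numbers has a natural density equal to ∏_p (1 + ∑_{i≥2} (u(i) - u(i-1))/p^i), where u is the characteristic function of S and the product runs over all primes. -/

import Mathlib

def IsExpSNumber (S : Set ℕ) (N : ℕ) : Prop :=
  0 < N ∧ ∀ p : ℕ, p.Prime → p ∣ N → N.factorization p ∈ S

def HasDensity (A : Set ℕ) (d : ℝ) : Prop :=
  Filter.Tendsto (fun N : ℕ => ({n : ℕ | n ∈ A ∧ n ≤ N}.ncard : ℝ) / N)
    Filter.atTop (nhds d)

open Finset Filter ArithmeticFunction Topology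

namespace Stmt9

noncomputable def ind (S : Set ℕ) : ℕ → ℝ := Set.indicator S fun _ => 1

lemma ind_nonneg (S : Set ℕ) (a : ℕ) : 0 ≤ ind S a := by
  unfold ind; classical
  rw [Set.indicator_apply]; split <;> norm_num

lemma ind_le_one (S : Set ℕ) (a : ℕ) : ind S a ≤ 1 := by
  unfold ind; classical
  rw [Set.indicator_apply]; split <;> norm_num

noncomputable def w (S : Set ℕ) : ℕ → ℝ := fun a =>
  if a = 0 then 1 else if a = 1 then 0 else ind S a - ind S (a - 1)

lemma w_zero (S : Set ℕ) : w S 0 = 1 := rfl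

lemma w_one (S : Set ℕ) : w S 1 = 0 := rfl

lemma w_add_two (S : Set ℕ) (i : ℕ) : w S (i + 2) = ind S (i + 2) - ind S (i + 1) := by
  simp [w]

lemma abs_w_le (S : Set ℕ) (a : ℕ) : |w S a| ≤ 1 := by
  unfold w
  split
  · norm_num
  · split
    · norm_num
    · rw [abs_sub_le_iff]
      constructor <;> nlinarith [ind_nonneg S a, ind_le_one S a,
        ind_nonneg S (a-1), ind_le_one S (a-1)]

noncomputable def G (S : Set ℕ) : ArithmeticFunction ℝ :=
  ⟨fun n => if n = 0 then 0 else n.factorization.prod fun _ a => w S a, by simp⟩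

lemma G_apply (S : Set ℕ) (n : ℕ) (hn : n ≠ 0) :
    G S n = n.factorization.prod fun _ a => w S a := by
  simp [G, hn]

lemma G_prime_pow (S : Set ℕ) {p : ℕ} (hp : p.Prime) (k : ℕ) :
    G S (p ^ k) = w S k := by
  rw [G_apply S _ (pow_ne_zero k hp.pos.ne'), hp.factorization_pow]
  exact Finsupp.prod_single_index (w_zero S)

lemma hG_mult (S : Set ℕ) : (G S).IsMultiplicative := by
  constructor
  · show G S 1 = 1
    rw [G_apply S 1 one_ne_zero]
    simp
  · intro m n hmn
    rcases eq_or_ne m 0 with rfl | hm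
    · simp [G]
    rcases eq_or_ne n 0 with rfl | hn
    · simp [G]
    rw [G_apply S _ (mul_ne_zero hm hn), G_apply S _ hm, G_apply S _ hn,
      Nat.factorization_mul_of_coprime hmn,
      Finsupp.prod_add_index_of_disjoint]
    simp only [Nat.support_factorization]
    exact Nat.Coprime.disjoint_primeFactors hmn

lemma abs_G_le (S : Set ℕ) (n : ℕ) : |G S n| ≤ 1 := by
  rcases eq_or_ne n 0 with rfl | hn
  · simp [G]
  rw [G_apply S n hn, Finsupp.prod, Finset.abs_prod]
  exact Finset.prod_le_one (fun i _ => abs_nonneg _) (fun i _ => abs_w_le S _)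

lemma G_ne_zero_imp (S : Set ℕ) (n : ℕ) (h : G S n ≠ 0) :
    n ≠ 0 ∧ ∀ p ∈ n.primeFactors, 2 ≤ n.factorization p := by
  rcases eq_or_ne n 0 with rfl | hn
  · simp [G] at h
  refine ⟨hn, fun p hp => ?_⟩
  by_contra hlt
  push_neg at hlt
  have h1 : n.factorization p = 1 := by
    have h0 : n.factorization p ≠ 0 := by
      rwa [← Finsupp.mem_support_iff, Nat.support_factorization]
    omega
  apply h
  rw [G_apply S n hn, Finsupp.prod]
  refine Finset.prod_eq_zero (i := p) ?_ ?_
  · rwa [Nat.support_factorization]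
  · rw [h1, w_one]

open Classical in
noncomputable def F (S : Set ℕ) : ArithmeticFunction ℝ :=
  ⟨fun n => if IsExpSNumber S n then 1 else 0, by
    have : ¬ IsExpSNumber S 0 := by rintro ⟨h, -⟩; exact lt_irrefl 0 h
    simp [this]⟩

open Classical in
lemma F_apply (S : Set ℕ) (n : ℕ) : F S n = if IsExpSNumber S n then 1 else 0 := rfl

lemma expS_one (S : Set ℕ) : IsExpSNumber S 1 := by
  refine ⟨one_pos, fun p hp hd => absurd (Nat.eq_one_of_dvd_one hd ▸ hp) Nat.not_prime_one⟩

lemma expS_mul (S : Set ℕ) {m n : ℕ} (hm : m ≠ 0) (hn : n ≠ 0) (h : m.Coprime n) :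
    IsExpSNumber S (m * n) ↔ IsExpSNumber S m ∧ IsExpSNumber S n := by
  have hfact : (m * n).factorization = m.factorization + n.factorization :=
    Nat.factorization_mul hm hn
  have key : ∀ p : ℕ, p.Prime → p ∣ m → (m * n).factorization p = m.factorization p := by
    intro p hp hd
    have : ¬ p ∣ n := fun hd' => hp.one_lt.ne'
      (Nat.eq_one_of_dvd_coprimes h hd hd')
    rw [hfact, Finsupp.add_apply, Nat.factorization_eq_zero_of_not_dvd this, add_zero]
  have key' : ∀ p : ℕ, p.Prime → p ∣ n → (m * n).factorization p = n.factorization p := by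
    intro p hp hd
    have : ¬ p ∣ m := fun hd' => hp.one_lt.ne'
      (Nat.eq_one_of_dvd_coprimes h hd' hd)
    rw [hfact, Finsupp.add_apply, Nat.factorization_eq_zero_of_not_dvd this, zero_add]
  constructor
  · rintro ⟨-, hall⟩
    exact ⟨⟨Nat.pos_of_ne_zero hm, fun p hp hd => key p hp hd ▸
        hall p hp (hd.mul_right n)⟩,
      ⟨Nat.pos_of_ne_zero hn, fun p hp hd => key' p hp hd ▸
        hall p hp (hd.mul_left m)⟩⟩
  · rintro ⟨⟨-, h₁⟩, ⟨-, h₂⟩⟩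
    refine ⟨Nat.pos_of_ne_zero (mul_ne_zero hm hn), fun p hp hd => ?_⟩
    rcases hp.dvd_mul.mp hd with hd' | hd'
    · rw [key p hp hd']; exact h₁ p hp hd'
    · rw [key' p hp hd']; exact h₂ p hp hd'

open Classical in
lemma hF_mult (S : Set ℕ) : (F S).IsMultiplicative := by
  constructor
  · show F S 1 = 1
    rw [F_apply, if_pos (expS_one S)]
  · intro m n hmn
    rcases eq_or_ne m 0 with rfl | hm
    · simp [F_apply]
    rcases eq_or_ne n 0 with rfl | hn
    · simp [F_apply]
    rw [F_apply, F_apply, F_apply, expS_mul S hm hn hmn]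
    by_cases h₁ : IsExpSNumber S m <;> by_cases h₂ : IsExpSNumber S n <;>
      simp [h₁, h₂]

lemma sum_w (S : Set ℕ) (h1 : 1 ∈ S) (k : ℕ) :
    ∑ j ∈ range (k + 2), w S j = ind S (k + 1) := by
  induction k with
  | zero =>
    rw [Finset.sum_range_succ, Finset.sum_range_one, w_zero, w_one, add_zero]
    simp [ind, Set.indicator_of_mem h1]
  | succ k ih =>
    rw [Finset.sum_range_succ, ih, w_add_two]
    ring

lemma expS_prime_pow (S : Set ℕ) {p : ℕ} (hp : p.Prime) (k : ℕ) (hk : k ≠ 0) :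
    IsExpSNumber S (p ^ k) ↔ k ∈ S := by
  constructor
  · rintro ⟨-, hall⟩
    have := hall p hp (dvd_pow_self p hk)
    rwa [hp.factorization_pow, Finsupp.single_eq_same] at this
  · intro hkS
    refine ⟨pow_pos hp.pos k, fun q hq hd => ?_⟩
    have hqp : q = p := by
      rw [← Nat.prime_dvd_prime_iff_eq hq hp]
      exact hq.dvd_of_dvd_pow hd
    subst hqp
    rwa [hp.factorization_pow, Finsupp.single_eq_same]

open Classical in
lemma expS_prime_pow_ite (S : Set ℕ) {p : ℕ} (hp : p.Prime) (k : ℕ) (hk : k ≠ 0) :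
    (if IsExpSNumber S (p ^ k) then (1 : ℝ) else 0) = ind S k := by
  rw [ind, Set.indicator_apply]
  by_cases h : k ∈ S <;> simp [h, expS_prime_pow S hp k hk]

open scoped ArithmeticFunction.zeta in
open Classical in
lemma F_eq (S : Set ℕ) (h1 : 1 ∈ S) : (↑(ζ : ArithmeticFunction ℕ) * G S) = F S := by
  rw [ArithmeticFunction.IsMultiplicative.eq_iff_eq_on_prime_powers _ (isMultiplicative_zeta.natCast.mul (hG_mult S)) _ (hF_mult S)]
  intro p i hp
  rw [coe_zeta_mul_apply, Nat.sum_divisors_prime_pow hp]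
  simp only [G_prime_pow S hp]
  rcases Nat.eq_zero_or_pos i with rfl | hi
  · rw [Finset.sum_range_one, w_zero, F_apply, if_pos (by simpa using expS_one S)]
  obtain ⟨k, rfl⟩ : ∃ k, i = k + 1 := ⟨i - 1, by omega⟩
  rw [show k + 1 + 1 = k + 2 from rfl, sum_w S h1 k, F_apply,
    expS_prime_pow_ite S hp (k + 1) (by omega)]

/-- squarefree-ish decomposition components -/
noncomputable def A (n : ℕ) : ℕ :=
  n.factorization.prod fun p e => p ^ ((e - 3 * (e % 2)) / 2)

noncomputable def B (n : ℕ) : ℕ :=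
  n.factorization.prod fun p e => p ^ (e % 2)

lemma A_pos (n : ℕ) : 0 < A n := by
  rw [A, Finsupp.prod]
  apply Finset.prod_pos
  intro p hp
  have : p.Prime := Nat.prime_of_mem_primeFactors (by rwa [← Nat.support_factorization])
  exact pow_pos this.pos _

lemma B_pos (n : ℕ) : 0 < B n := by
  rw [B, Finsupp.prod]
  apply Finset.prod_pos
  intro p hp
  have : p.Prime := Nat.prime_of_mem_primeFactors (by rwa [← Nat.support_factorization])
  exact pow_pos this.pos _

lemma sq_decomp (n : ℕ) (hn : n ≠ 0) (h : ∀ p ∈ n.primeFactors, 2 ≤ n.factorization p) :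
    A n ^ 2 * B n ^ 3 = n := by
  rw [A, B, Finsupp.prod, Finsupp.prod, ← Finset.prod_pow, ← Finset.prod_pow,
    ← Finset.prod_mul_distrib]
  conv_rhs => rw [← Nat.factorization_prod_pow_eq_self hn, Finsupp.prod]
  refine Finset.prod_congr rfl fun p hp => ?_
  rw [← pow_mul, ← pow_mul, ← pow_add]
  congr 1
  have h2 : 2 ≤ n.factorization p := h p (by rwa [← Nat.support_factorization])
  omega

lemma summable_bound (S : Set ℕ) : Summable (fun d : ℕ => |G S d| / d) := by
  classical
  have C2 : Summable (fun a : ℕ => 1 / (a : ℝ) ^ 2) :=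
    Real.summable_one_div_nat_pow.mpr (by norm_num)
  have C3 : Summable (fun a : ℕ => 1 / (a : ℝ) ^ 3) :=
    Real.summable_one_div_nat_pow.mpr (by norm_num)
  apply summable_of_sum_range_le
    (c := (∑' a : ℕ, 1 / (a : ℝ) ^ 2) * (∑' b : ℕ, 1 / (b : ℝ) ^ 3))
  · intro d; positivity
  · intro M
    have decomp : ∀ d ∈ (range M).filter (fun d => G S d ≠ 0), A d ^ 2 * B d ^ 3 = d := by
      intro d hd
      rw [Finset.mem_filter] at hd
      obtain ⟨hd0, hsq⟩ := G_ne_zero_imp S d hd.2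
      exact sq_decomp d hd0 hsq
    have hAB_lt : ∀ d ∈ (range M).filter (fun d => G S d ≠ 0), A d < M ∧ B d < M := by
      intro d hd
      have hdM : d < M := Finset.mem_range.mp (Finset.mem_filter.mp hd).1
      have := decomp d hd
      have hA := A_pos d
      have hB := B_pos d
      have hAle : A d ≤ d := by
        calc A d ≤ A d ^ 2 := Nat.le_self_pow two_ne_zero _
          _ ≤ A d ^ 2 * B d ^ 3 := Nat.le_mul_of_pos_right _ (pow_pos hB 3)
          _ = d := this
      have hBle : B d ≤ d := by
        calc B d ≤ B d ^ 3 := Nat.le_self_pow three_ne_zero _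
          _ ≤ A d ^ 2 * B d ^ 3 := Nat.le_mul_of_pos_left _ (pow_pos hA 2)
          _ = d := this
      omega
    calc ∑ d ∈ range M, |G S d| / d
        ≤ ∑ d ∈ (range M).filter (fun d => G S d ≠ 0), 1 / (d : ℝ) := by
          rw [Finset.sum_filter]
          apply Finset.sum_le_sum
          intro d _
          by_cases h : G S d = 0
          · simp [h]
          · rw [if_pos h]
            have hd0 : d ≠ 0 := fun h0 => h (h0 ▸ (G S).map_zero)
            have hc : (0 : ℝ) < d := Nat.cast_pos.mpr (Nat.pos_of_ne_zero hd0)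
            exact (div_le_div_iff_of_pos_right hc).mpr (abs_G_le S d)
      _ = ∑ d ∈ (range M).filter (fun d => G S d ≠ 0),
            1 / ((A d : ℝ) ^ 2 * (B d : ℝ) ^ 3) := by
          refine Finset.sum_congr rfl fun d hd => ?_
          have hsd : ((A d : ℝ) ^ 2 * (B d : ℝ) ^ 3) = (d : ℝ) := by
            exact_mod_cast congrArg (Nat.cast : ℕ → ℝ) (decomp d hd)
          rw [← hsd]
      _ = ∑ q ∈ ((range M).filter (fun d => G S d ≠ 0)).image (fun d => (A d, B d)),
            1 / ((q.1 : ℝ) ^ 2 * (q.2 : ℝ) ^ 3) := by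
          rw [Finset.sum_image]
          intro x hx y hy hxy
          rw [Prod.mk.injEq] at hxy
          rw [← decomp x hx, ← decomp y hy, hxy.1, hxy.2]
      _ ≤ ∑ q ∈ range M ×ˢ range M, 1 / ((q.1 : ℝ) ^ 2 * (q.2 : ℝ) ^ 3) := by
          apply Finset.sum_le_sum_of_subset_of_nonneg
          · intro q hq
            rw [Finset.mem_image] at hq
            obtain ⟨d, hd, rfl⟩ := hq
            rw [Finset.mem_product]
            exact ⟨Finset.mem_range.mpr (hAB_lt d hd).1, Finset.mem_range.mpr (hAB_lt d hd).2⟩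
          · intro q _ _; positivity
      _ = (∑ a ∈ range M, 1 / (a : ℝ) ^ 2) * (∑ b ∈ range M, 1 / (b : ℝ) ^ 3) := by
          rw [Finset.sum_mul_sum]
          rw [Finset.sum_product]
          refine Finset.sum_congr rfl fun a _ => Finset.sum_congr rfl fun b _ => ?_
          rw [one_div_mul_one_div]
      _ ≤ (∑' a : ℕ, 1 / (a : ℝ) ^ 2) * (∑' b : ℕ, 1 / (b : ℝ) ^ 3) := by
          apply mul_le_mul (Summable.sum_le_tsum _ (fun a _ => by positivity) C2)
            (Summable.sum_le_tsum _ (fun b _ => by positivity) C3)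
            (Finset.sum_nonneg fun b _ => by positivity)
            (tsum_nonneg fun a => by positivity)

lemma count_eq (S : Set ℕ) (h1 : 1 ∈ S) (N : ℕ) :
    ({n : ℕ | n ∈ {N : ℕ | IsExpSNumber S N} ∧ n ≤ N}.ncard : ℝ) =
      ∑ d ∈ Ioc 0 N, G S d * ((N / d : ℕ) : ℝ) := by
  classical
  have hset : {n : ℕ | n ∈ {N : ℕ | IsExpSNumber S N} ∧ n ≤ N} =
      ↑((Ioc 0 N).filter (fun n => IsExpSNumber S n)) := by
    ext n
    simp only [Set.mem_setOf_eq, Finset.coe_filter, Finset.mem_Ioc]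
    constructor
    · rintro ⟨h, hle⟩; exact ⟨⟨h.1, hle⟩, h⟩
    · rintro ⟨⟨-, hle⟩, h⟩; exact ⟨h, hle⟩
  rw [hset, Set.ncard_coe_finset]
  have hcard : ((((Ioc 0 N).filter (fun n => IsExpSNumber S n)).card : ℕ) : ℝ) =
      ∑ n ∈ Ioc 0 N, F S n := by
    rw [Finset.card_filter, Nat.cast_sum]
    refine Finset.sum_congr rfl fun n _ => ?_
    rw [F_apply]
    split <;> simp
  rw [hcard]
  have hF : ∀ n ∈ Ioc 0 N, F S n = ∑ d ∈ (Ioc 0 N).filter (fun d => d ∣ n), G S d := by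
    intro n hn
    rw [Finset.mem_Ioc] at hn
    have hdiv : n.divisors = (Ioc 0 N).filter (fun d => d ∣ n) := by
      ext d
      simp only [Nat.mem_divisors, Finset.mem_filter, Finset.mem_Ioc]
      constructor
      · rintro ⟨hd, hn0⟩
        exact ⟨⟨Nat.pos_of_dvd_of_pos hd hn.1, le_trans (Nat.le_of_dvd hn.1 hd) hn.2⟩, hd⟩
      · rintro ⟨-, hd⟩
        exact ⟨hd, hn.1.ne'⟩
    rw [← F_eq S h1, coe_zeta_mul_apply, hdiv]
  rw [Finset.sum_congr rfl hF]
  simp_rw [Finset.sum_filter]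
  rw [Finset.sum_comm]
  refine Finset.sum_congr rfl fun d hd => ?_
  rw [← Finset.sum_filter, Finset.sum_const, Nat.Ioc_filter_dvd_card_eq_div,
    nsmul_eq_mul, mul_comm]

lemma tendsto_mod_div (d : ℕ) (hd : 0 < d) :
    Tendsto (fun N : ℕ => ((N % d : ℕ) : ℝ) / N) atTop (𝓝 0) := by
  apply tendsto_of_tendsto_of_tendsto_of_le_of_le' tendsto_const_nhds
    (tendsto_const_div_atTop_nhds_zero_nat (d : ℝ))
  · filter_upwards [eventually_ge_atTop 1] with N hN
    positivity
  · filter_upwards [eventually_ge_atTop 1] with N hN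
    gcongr
    exact_mod_cast le_of_lt (Nat.mod_lt N hd)

lemma tendsto_div_nat (d : ℕ) (hd : 0 < d) :
    Tendsto (fun N : ℕ => ((N / d : ℕ) : ℝ) / N) atTop (𝓝 (1 / d)) := by
  have hdr : (0 : ℝ) < d := Nat.cast_pos.mpr hd
  have h : Tendsto (fun N : ℕ => (1 - ((N % d : ℕ) : ℝ) / N) / d) atTop (𝓝 (1 / d)) := by
    have := (tendsto_const_nhds (x := (1 : ℝ)) (f := atTop)).sub (tendsto_mod_div d hd)
    simpa using this.div_const d
  apply h.congr'
  filter_upwards [eventually_ge_atTop 1] with N hN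
  have hN0 : (0 : ℝ) < N := by exact_mod_cast hN
  have hmod : (d : ℝ) * ((N / d : ℕ) : ℝ) + ((N % d : ℕ) : ℝ) = N := by
    exact_mod_cast congrArg (Nat.cast : ℕ → ℝ) (Nat.div_add_mod N d)
  have hq : ((N / d : ℕ) : ℝ) = ((N : ℝ) - ((N % d : ℕ) : ℝ)) / d := by
    field_simp
    linarith [hmod]
  rw [hq]
  have hms : (1 : ℝ) - ((N % d : ℕ) : ℝ) / N = ((N : ℝ) - ((N % d : ℕ) : ℝ)) / N := by
    field_simp
  rw [hms, div_div, div_div, mul_comm (N : ℝ) (d : ℝ)]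

lemma tsum_prime (S : Set ℕ) {p : ℕ} (hp : p.Prime) :
    ∑' e : ℕ, G S (p ^ e) / ((p ^ e : ℕ) : ℝ) =
      1 + ∑' i : ℕ, (ind S (i + 2) - ind S (i + 1)) / (p : ℝ) ^ (i + 2) := by
  have hpr : (1 : ℝ) < p := by exact_mod_cast hp.one_lt
  have hp0 : (0 : ℝ) < p := lt_trans one_pos hpr
  have heq : ∀ e : ℕ, G S (p ^ e) / ((p ^ e : ℕ) : ℝ) = w S e / (p : ℝ) ^ e := by
    intro e
    rw [G_prime_pow S hp e]
    push_cast
    ring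
  simp only [heq]
  have hsum : Summable (fun e : ℕ => w S e / (p : ℝ) ^ e) := by
    apply Summable.of_norm_bounded (g := fun e : ℕ => (1 / (p : ℝ)) ^ e)
      (summable_geometric_of_lt_one (by positivity)
        (by rw [div_lt_one hp0]; exact hpr))
    intro e
    rw [Real.norm_eq_abs, abs_div, abs_of_pos (pow_pos hp0 e), div_pow, one_pow]
    gcongr
    exact abs_w_le S e
  rw [hsum.tsum_eq_zero_add]
  have hsum1 : Summable (fun e : ℕ => w S (e + 1) / (p : ℝ) ^ (e + 1)) := by
    exact_mod_cast (summable_nat_add_iff 1).mpr hsum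
  rw [hsum1.tsum_eq_zero_add]
  rw [w_zero, w_one]
  simp only [pow_zero, zero_add, div_one, zero_div, zero_add]
  norm_num
  refine tsum_congr fun i => ?_
  rw [w_add_two]

end Stmt9

open Stmt9 in
theorem stmt_9 (S : Set ℕ) (h1 : 1 ∈ S)
    (u : ℕ → ℝ) (hu : ∀ i, u i = Set.indicator S (fun _ => (1 : ℝ)) i) :
    HasDensity {N : ℕ | IsExpSNumber S N}
      (∏' p : Nat.Primes, (1 + ∑' i : ℕ, (u (i + 2) - u (i + 1)) / (p : ℝ) ^ (i + 2))) := by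
  classical
  have hind : ∀ i, u i = ind S i := fun i => by rw [hu i]; rfl
  set f : ℕ → ℝ := fun d => G S d / d with hfdef
  have hnorm : ∀ d : ℕ, ‖f d‖ = |G S d| / d := by
    intro d
    rw [hfdef]
    rw [Real.norm_eq_abs, abs_div, Nat.abs_cast]
  have hsum_norm : Summable (fun d => ‖f d‖) := by
    simpa only [hnorm] using summable_bound S
  have hf1 : f 1 = 1 := by simp [hfdef, (hG_mult S).map_one]
  have hmul : ∀ {m n : ℕ}, Nat.Coprime m n → f (m * n) = f m * f n := by
    intro m n h
    simp only [hfdef]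
    rw [(hG_mult S).map_mul_of_coprime h]
    push_cast
    ring
  have hf0 : f 0 = 0 := by simp [hfdef]
  have euler := EulerProduct.eulerProduct_tprod hf1 hmul hsum_norm hf0
  have hprod : (∏' p : Nat.Primes,
      (1 + ∑' i : ℕ, (u (i + 2) - u (i + 1)) / (p : ℝ) ^ (i + 2))) = ∑' n, f n := by
    rw [← euler]
    refine tprod_congr fun p => ?_
    simp only [hind]
    exact (tsum_prime S p.prop).symm
  rw [hprod]
  unfold HasDensity
  set h : ℕ → ℕ → ℝ :=
    fun N d => if d ∈ Ioc 0 N then G S d * ((N / d : ℕ) : ℝ) / N else 0 with hhdef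
  have key : Tendsto (fun N => ∑' d, h N d) atTop (𝓝 (∑' d, f d)) := by
    apply tendsto_tsum_of_dominated_convergence (summable_bound S)
    · intro d
      rcases Nat.eq_zero_or_pos d with rfl | hd
      · have hz : ∀ N, h N 0 = 0 := fun N => by simp [hhdef]
        simp only [hz]
        have : f 0 = 0 := hf0
        rw [this]
        exact tendsto_const_nhds
      · have hfd : f d = G S d * (1 / d) := by rw [hfdef]; ring
        rw [hfd]
        apply Tendsto.congr' _ ((tendsto_div_nat d hd).const_mul (G S d))
        filter_upwards [eventually_ge_atTop d] with N hN
        rw [hhdef]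
        simp only [if_pos (Finset.mem_Ioc.mpr ⟨hd, hN⟩)]
        ring
    · apply Eventually.of_forall
      intro N d
      rw [hhdef]
      simp only []
      split_ifs with hmem
      · rw [Finset.mem_Ioc] at hmem
        have hd0 : (0 : ℝ) < d := by exact_mod_cast hmem.1
        have hN0 : (0 : ℝ) < N := lt_of_lt_of_le hd0 (by exact_mod_cast hmem.2)
        have hle : ((N / d : ℕ) : ℝ) / N ≤ 1 / d := by
          rw [div_le_div_iff₀ hN0 hd0]
          have := Nat.cast_div_le (m := N) (n := d) (α := ℝ)
          calc ((N / d : ℕ) : ℝ) * d ≤ ((N : ℝ) / d) * d := by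
                apply mul_le_mul_of_nonneg_right this (le_of_lt hd0)
            _ = N := by field_simp
            _ = 1 * N := (one_mul _).symm
        rw [Real.norm_eq_abs, mul_div_assoc, abs_mul]
        have h2 : |((N / d : ℕ) : ℝ) / N| = ((N / d : ℕ) : ℝ) / N := by
          apply abs_of_nonneg; positivity
        rw [h2]
        calc |G S d| * (((N / d : ℕ) : ℝ) / N) ≤ |G S d| * (1 / d) :=
              mul_le_mul_of_nonneg_left hle (abs_nonneg _)
          _ = |G S d| / d := by ring
      · rw [norm_zero]
        positivity
  have hratio : ∀ N : ℕ,
      (({n : ℕ | n ∈ {N : ℕ | IsExpSNumber S N} ∧ n ≤ N}.ncard : ℝ)) / N = ∑' d, h N d := by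
    intro N
    rw [count_eq S h1 N]
    rw [tsum_eq_sum (s := Ioc 0 N) (fun d hd => by simp only [hhdef]; rw [if_neg hd])]
    rw [Finset.sum_div]
    refine Finset.sum_congr rfl fun d hd => ?_
    simp only [hhdef]
    rw [if_pos hd]
  exact key.congr fun N => (hratio N).symm
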